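/- Let R ~ N(μ, K) be a multivariate Gaussian over a finite index set X with σ_x := sqrt(K_{x,x}). Define R* := max_x R_x and p*_x := P[R_x = R*]. Then E[R*] ≤ Σ_x p*_x (μ_x + σ_x sqrt(−2 ln p*_x)), i.e., E[R*] ≤ V(p*) ≤ max_{p ∈ Δ^{|X|−1}} V(p). -/

import Mathlib

open MeasureTheory ProbabilityTheory Filter Set Matrix

/-- The VBOS objective `V(p) = Σ_x p_x (μ_x + σ_x sqrt(−2 ln p_x))`. -/
noncomputable def vbos {X : Type*} [Fintype X] (μ σ : X → ℝ) (p : X → ℝ) : ℝ :=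
  ∑ x, p x * (μ x + σ x * Real.sqrt (-2 * Real.log (p x)))

/-- `R` is a Gaussian random vector with mean `μ` and covariance `K`: every linear
combination of its coordinates is a real Gaussian with the corresponding mean and variance. -/
def IsGaussianVector {Ω X : Type*} [MeasurableSpace Ω] [Fintype X]
    (P : Measure Ω) (R : X → Ω → ℝ) (μ : X → ℝ) (K : Matrix X X ℝ) : Prop :=
  ∀ w : X → ℝ,
    Measure.map (fun ω => ∑ x, w x * R x ω) P =
      gaussianReal (∑ x, w x * μ x) (w ⬝ᵥ (K *ᵥ w)).toNNReal


noncomputable def phiN (x : ℝ) : ℝ := (Real.sqrt (2 * Real.pi))⁻¹ * Real.exp (-x ^ 2 / 2)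

lemma phiN_eq : phiN = gaussianPDFReal 0 1 := by
  ext x
  simp [phiN, gaussianPDFReal]

lemma phiN_pos (x : ℝ) : 0 < phiN x := by
  have := Real.sqrt_pos.2 (by positivity : (0:ℝ) < 2 * Real.pi)
  exact mul_pos (inv_pos.2 this) (Real.exp_pos _)

lemma continuous_phiN : Continuous phiN := by
  unfold phiN
  fun_prop

lemma integrable_phiN : Integrable phiN := by
  rw [phiN_eq]; exact ProbabilityTheory.integrable_gaussianPDFReal 0 1

lemma phiN_exp_form (x : ℝ) : phiN x = (Real.sqrt (2 * Real.pi))⁻¹ * Real.exp (-(1/2) * x ^ 2) := by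
  rw [phiN]; ring_nf

lemma integrable_mul_phiN : Integrable (fun x => x * phiN x) := by
  have h := integrable_mul_exp_neg_mul_sq (b := 1/2) (by norm_num)
  have := h.const_mul (Real.sqrt (2 * Real.pi))⁻¹
  refine this.congr ?_
  filter_upwards with x
  rw [phiN_exp_form]; ring

lemma tendsto_phiN_atTop : Tendsto phiN atTop (nhds 0) := by
  rw [show (0:ℝ) = (Real.sqrt (2 * Real.pi))⁻¹ * 0 by ring]
  apply Tendsto.const_mul
  apply Real.tendsto_exp_atBot.comp
  have h : Tendsto (fun x : ℝ => x ^ 2 / 2) atTop atTop :=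
    (tendsto_pow_atTop (by norm_num)).atTop_div_const (by norm_num)
  have : Tendsto (fun x : ℝ => -(x ^ 2 / 2)) atTop atBot := tendsto_neg_atBot_iff.mpr h
  refine this.congr (fun x => by ring)

lemma tendsto_phiN_atBot : Tendsto phiN atBot (nhds 0) := by
  have : Tendsto (fun x : ℝ => phiN (-x)) atTop (nhds 0) := by
    refine tendsto_phiN_atTop.congr (fun x => ?_)
    simp [phiN]
  have h2 := this.comp tendsto_neg_atBot_atTop
  refine h2.congr (fun x => by simp)

lemma hasDerivAt_neg_phiN (x : ℝ) : HasDerivAt (fun y => -phiN y) (x * phiN x) x := by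
  have h1 : HasDerivAt (fun y : ℝ => -y ^ 2 / 2) (-x) x := by
    have := ((hasDerivAt_pow 2 x).neg).div_const 2
    simpa using this.congr_deriv (by ring)
  have h2 : HasDerivAt (fun y : ℝ => Real.exp (-y ^ 2 / 2)) (Real.exp (-x ^ 2 / 2) * (-x)) x :=
    (Real.hasDerivAt_exp _).comp x h1
  have h3 := (h2.const_mul (Real.sqrt (2 * Real.pi))⁻¹).neg
  refine h3.congr_deriv ?_
  rw [phiN]; ring

noncomputable def QN (t : ℝ) : ℝ := ∫ x in Set.Ioi t, phiN x

lemma integral_phiN : ∫ x, phiN x = 1 := by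
  rw [phiN_eq]
  exact ProbabilityTheory.integral_gaussianPDFReal_eq_one 0 (by norm_num)
lemma integrableOn_phiN (s : Set ℝ) : IntegrableOn phiN s := integrable_phiN.integrableOn

lemma QN_pos (t : ℝ) : 0 < QN t := by
  rw [QN]
  rw [setIntegral_pos_iff_support_of_nonneg_ae]
  · have : Function.support phiN = Set.univ := by
      ext x; simp [Function.support, (phiN_pos x).ne']
    rw [this, Set.univ_inter]
    simp [Real.volume_Ioi]
  · filter_upwards with x using (phiN_pos x).le
  · exact integrableOn_phiN _

lemma QN_add (t : ℝ) : (∫ x in Set.Iic t, phiN x) + QN t = 1 := by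
  rw [QN, ← setIntegral_union (Set.Iic_disjoint_Ioi le_rfl) measurableSet_Ioi
      (integrableOn_phiN _) (integrableOn_phiN _), Set.Iic_union_Ioi, ← integral_phiN]
  exact setIntegral_univ

lemma Iic_integral_pos (t : ℝ) : 0 < ∫ x in Set.Iic t, phiN x := by
  rw [setIntegral_pos_iff_support_of_nonneg_ae]
  · have : Function.support phiN = Set.univ := by
      ext x; simp [Function.support, (phiN_pos x).ne']
    rw [this, Set.univ_inter]
    simp [Real.volume_Iic]
  · filter_upwards with x using (phiN_pos x).le
  · exact integrableOn_phiN _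

lemma QN_lt_one (t : ℝ) : QN t < 1 := by
  have := QN_add t
  nlinarith [Iic_integral_pos t]

lemma QN_split {a b : ℝ} (h : a ≤ b) : QN a = (∫ x in a..b, phiN x) + QN b := by
  rw [QN, QN, ← Set.Ioc_union_Ioi_eq_Ioi h,
    setIntegral_union (Set.Ioc_disjoint_Ioi le_rfl) measurableSet_Ioi
      (integrableOn_phiN _) (integrableOn_phiN _), intervalIntegral.integral_of_le h]

lemma QN_eq (t : ℝ) : QN t = QN 0 - ∫ x in (0:ℝ)..t, phiN x := by
  rcases le_total 0 t with h | h
  · rw [QN_split h]; ring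
  · rw [QN_split h, intervalIntegral.integral_symm]; ring

lemma hasDerivAt_QN (t : ℝ) : HasDerivAt (QN) (-phiN t) t := by
  have h : HasDerivAt (fun u => ∫ x in (0:ℝ)..u, phiN x) (phiN t) t :=
    intervalIntegral.integral_hasDerivAt_right integrable_phiN.intervalIntegrable
      continuous_phiN.stronglyMeasurable.stronglyMeasurableAtFilter
      continuous_phiN.continuousAt
  have h2 := (hasDerivAt_const t (QN 0)).sub h
  refine HasDerivAt.congr_deriv (h2.congr_of_eventuallyEq ?_) (by ring)
  filter_upwards with u using (QN_eq u)

lemma tendsto_QN_atTop : Tendsto (QN) atTop (nhds 0) := by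
  have h : Tendsto (fun t => ∫ x in Set.Iic t, phiN x) atTop (nhds 1) := by
    have := tendsto_setIntegral_of_monotone (s := fun t : ℝ => Set.Iic t)
      (f := phiN) (μ := volume) (fun i => measurableSet_Iic)
      (fun a b hab => Set.Iic_subset_Iic.2 hab) (integrableOn_phiN _)
    rwa [Set.iUnion_Iic, setIntegral_univ, integral_phiN] at this
  have h2 : Tendsto (fun t => 1 - ∫ x in Set.Iic t, phiN x) atTop (nhds 0) := by
    simpa using (tendsto_const_nhds (x := (1:ℝ))).sub h
  refine h2.congr (fun t => ?_)
  have := QN_add t; linarith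

lemma tendsto_QN_atBot : Tendsto (QN) atBot (nhds 1) := by
  have h : Tendsto (fun t : ℝ => QN (-t)) atTop (nhds 1) := by
    have := tendsto_setIntegral_of_monotone (s := fun t : ℝ => Set.Ioi (-t))
      (f := phiN) (μ := volume) (fun i => measurableSet_Ioi)
      (fun a b hab => Set.Ioi_subset_Ioi (neg_le_neg hab)) (integrableOn_phiN _)
    have hU : ⋃ t : ℝ, Set.Ioi (-t) = Set.univ := by
      ext x; simp only [Set.mem_iUnion, Set.mem_Ioi, Set.mem_univ, iff_true]
      exact ⟨-(x - 1), by norm_num⟩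
    rwa [hU, setIntegral_univ, integral_phiN] at this
  have := h.comp tendsto_neg_atBot_atTop
  refine this.congr (fun t => by simp)

lemma hasDerivAt_phiN (x : ℝ) : HasDerivAt phiN (-(x * phiN x)) x := by
  have := (hasDerivAt_neg_phiN x).neg
  refine (this.congr_of_eventuallyEq ?_).congr_deriv rfl
  filter_upwards with y using by simp

lemma continuous_QN : Continuous QN :=
  continuous_iff_continuousAt.2 fun t => (hasDerivAt_QN t).continuousAt

lemma tendsto_mul_phiN_atTop : Tendsto (fun u => u * phiN u) atTop (nhds 0) := by
  have h := (tendsto_rpow_abs_mul_exp_neg_mul_sq_cocompact (a := 1/2) (by norm_num) 1).mono_left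
    atTop_le_cocompact
  have h2 := h.const_mul (Real.sqrt (2 * Real.pi))⁻¹
  rw [mul_zero] at h2
  have h3 : Tendsto (fun u : ℝ => |u| * phiN u) atTop (nhds 0) := by
    refine h2.congr (fun x => ?_)
    rw [phiN, Real.rpow_one]
    ring_nf
  refine tendsto_of_tendsto_of_tendsto_of_le_of_le (g := fun u : ℝ => -(|u| * phiN u))
    (h := fun u : ℝ => |u| * phiN u) (by simpa using h3.neg) h3 ?_ ?_
  · intro u
    have := mul_le_mul_of_nonneg_right (neg_abs_le u) (phiN_pos u).le
    simpa using this
  · intro u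
    exact mul_le_mul_of_nonneg_right (le_abs_self u) (phiN_pos u).le

/-- Mills lower bound. -/
noncomputable def MN (u : ℝ) : ℝ := QN u - u * phiN u / (1 + u ^ 2)

lemma one_add_sq_pos (u : ℝ) : (0:ℝ) < 1 + u ^ 2 := by positivity

lemma hasDerivAt_MN (u : ℝ) :
    HasDerivAt MN (-(2 * phiN u / (1 + u ^ 2) ^ 2)) u := by
  have h1 : HasDerivAt (fun u : ℝ => u * phiN u) (phiN u + u * -(u * phiN u)) u := by
    have := (hasDerivAt_id u).mul (hasDerivAt_phiN u)
    exact this.congr_deriv (by simp [id])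
  have h2 : HasDerivAt (fun u : ℝ => 1 + u ^ 2) (2 * u) u := by
    exact ((hasDerivAt_const u (1:ℝ)).add (hasDerivAt_pow 2 u)).congr_deriv (by norm_num)
  have h3 := h1.div h2 (one_add_sq_pos u).ne'
  have h4 := (hasDerivAt_QN u).sub h3
  refine h4.congr_deriv ?_
  field_simp
  ring
 
lemma MN_nonneg (u : ℝ) : 0 ≤ MN u := by
  have hanti : Antitone MN := by
    refine antitone_of_deriv_nonpos (fun x => (hasDerivAt_MN x).differentiableAt) (fun x => ?_)
    rw [(hasDerivAt_MN x).deriv]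
    have := phiN_pos x
    have := one_add_sq_pos x
    have h5 : (0:ℝ) ≤ 2 * phiN x / (1 + x ^ 2) ^ 2 := by positivity
    linarith
  have hlim : Tendsto MN atTop (nhds 0) := by
    have h1 : Tendsto (fun u => u * phiN u / (1 + u ^ 2)) atTop (nhds 0) := by
      have ha : Tendsto (fun u : ℝ => (1 + u ^ 2)⁻¹) atTop (nhds 0) := by
        apply tendsto_inv_atTop_zero.comp
        apply tendsto_atTop_add_const_left
        exact tendsto_pow_atTop (by norm_num)
      have := tendsto_mul_phiN_atTop.mul ha
      rw [mul_zero] at this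
      refine this.congr (fun u => by rw [div_eq_mul_inv])
    have := tendsto_QN_atTop.sub h1
    show Tendsto (fun u => QN u - u * phiN u / (1 + u ^ 2)) atTop (nhds 0)
    simpa using this
  refine le_of_tendsto hlim ?_
  filter_upwards [eventually_ge_atTop u] with t ht using hanti ht

lemma mills_lower (u : ℝ) : u * phiN u / (1 + u ^ 2) ≤ QN u := by
  have := MN_nonneg u; rw [MN] at this; linarith

noncomputable def GN (u : ℝ) : ℝ := QN u ^ 2 + u * phiN u * QN u - phiN u ^ 2

lemma hasDerivAt_GN (u : ℝ) :
    HasDerivAt GN (phiN u * (u * phiN u - (1 + u ^ 2) * QN u)) u := by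
  have hq := hasDerivAt_QN u
  have hp := hasDerivAt_phiN u
  have h1 : HasDerivAt (fun u : ℝ => u * phiN u) (phiN u + u * -(u * phiN u)) u := by
    have := (hasDerivAt_id u).mul hp
    exact this.congr_deriv (by simp [id])
  have h2 := ((hq.pow 2).add ((h1.mul hq))).sub (hp.pow 2)
  refine h2.congr_deriv ?_
  ring

lemma GN_nonneg (u : ℝ) : 0 ≤ GN u := by
  have hanti : Antitone GN := by
    refine antitone_of_deriv_nonpos (fun x => (hasDerivAt_GN x).differentiableAt) (fun x => ?_)
    rw [(hasDerivAt_GN x).deriv]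
    have h1 := mills_lower x
    have h2 := (phiN_pos x).le
    have h3 := one_add_sq_pos x
    have h4 : x * phiN x ≤ (1 + x ^ 2) * QN x := by
      rw [div_le_iff₀ h3] at h1; linarith
    have : x * phiN x - (1 + x ^ 2) * QN x ≤ 0 := by linarith
    exact mul_nonpos_of_nonneg_of_nonpos h2 this
  have hlim : Tendsto GN atTop (nhds 0) := by
    have h1 := (tendsto_QN_atTop.pow 2).add (tendsto_mul_phiN_atTop.mul tendsto_QN_atTop)
    have h2 := h1.sub (tendsto_phiN_atTop.pow 2)
    show Tendsto (fun u => QN u ^ 2 + u * phiN u * QN u - phiN u ^ 2) atTop (nhds 0)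
    simpa using h2
  refine le_of_tendsto hlim ?_
  filter_upwards [eventually_ge_atTop u] with t ht using hanti ht

noncomputable def HN (u : ℝ) : ℝ := -2 * Real.log (QN u) - (phiN u / QN u) ^ 2

lemma hasDerivAt_HN (u : ℝ) :
    HasDerivAt HN (2 * phiN u / QN u ^ 3 * GN u) u := by
  have hq := hasDerivAt_QN u
  have hp := hasDerivAt_phiN u
  have hQ0 := QN_pos u
  have h1 : HasDerivAt (fun u : ℝ => Real.log (QN u)) (-phiN u / QN u) u :=
    (Real.hasDerivAt_log hQ0.ne').comp u hq |>.congr_deriv (by ring)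
  have h2 := (hp.div hq hQ0.ne').pow 2
  have h3 := (h1.const_mul (-2)).sub h2
  refine h3.congr_deriv ?_
  simp only [Pi.div_apply, show (2:ℕ) - 1 = 1 from rfl, pow_one]
  rw [GN]
  have hQne := hQ0.ne'
  field_simp
  ring

lemma HN_nonneg (u : ℝ) : 0 ≤ HN u := by
  have hmono : Monotone HN := by
    refine monotone_of_deriv_nonneg (fun x => (hasDerivAt_HN x).differentiableAt) (fun x => ?_)
    rw [(hasDerivAt_HN x).deriv]
    have hg := GN_nonneg x
    have hp := (phiN_pos x).le
    have hq := (QN_pos x).le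
    have : (0:ℝ) ≤ 2 * phiN x / QN x ^ 3 := by positivity
    exact mul_nonneg this hg
  have hlim : Tendsto HN atBot (nhds 0) := by
    have h1 : Tendsto (fun u => Real.log (QN u)) atBot (nhds 0) := by
      have := (Real.continuousAt_log (by norm_num : (1:ℝ) ≠ 0)).tendsto.comp tendsto_QN_atBot
      simpa [Function.comp_def] using this
    have h2 : Tendsto (fun u => (phiN u / QN u) ^ 2) atBot (nhds 0) := by
      have := (tendsto_phiN_atBot.div tendsto_QN_atBot (by norm_num)).pow 2
      simpa using this
    have h4 := (h1.const_mul (-2)).sub h2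
    rw [mul_zero, sub_zero] at h4
    refine h4.congr (fun x => by rw [HN])
  refine le_of_tendsto hlim ?_
  filter_upwards [eventually_le_atBot u] with t ht using hmono ht

/-- The key inequality: `φ(u) ≤ Q(u) √(-2 ln Q(u))`. -/
lemma phiN_le_QN_sqrt (u : ℝ) : phiN u ≤ QN u * Real.sqrt (-2 * Real.log (QN u)) := by
  have h := HN_nonneg u
  rw [HN] at h
  have hQ := QN_pos u
  have h2 : (phiN u / QN u) ^ 2 ≤ -2 * Real.log (QN u) := by linarith
  have h3 : phiN u / QN u ≤ Real.sqrt (-2 * Real.log (QN u)) := by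
    rw [← Real.sqrt_sq (div_nonneg (phiN_pos u).le hQ.le)]
    exact Real.sqrt_le_sqrt h2
  calc phiN u = QN u * (phiN u / QN u) := by field_simp
    _ ≤ QN u * Real.sqrt (-2 * Real.log (QN u)) := by
        exact mul_le_mul_of_nonneg_left h3 hQ.le

lemma QN_surj {p : ℝ} (hp0 : 0 < p) (hp1 : p < 1) : ∃ u, QN u = p := by
  obtain ⟨a, ha⟩ : ∃ a, QN a < p := by
    exact (tendsto_QN_atTop.eventually (eventually_lt_nhds hp0)).exists
  obtain ⟨b, hb⟩ : ∃ b, p < QN b := by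
    exact (tendsto_QN_atBot.eventually (eventually_gt_nhds hp1)).exists
  have h := intermediate_value_uIcc (f := QN) (a := a) (b := b) (continuous_QN.continuousOn)
  have hmem : p ∈ uIcc (QN a) (QN b) := by
    rw [Set.mem_uIcc]; left; exact ⟨ha.le, hb.le⟩
  obtain ⟨u, _, hu⟩ := h hmem
  exact ⟨u, hu⟩

/-! ### Part 4: integrals against the standard Gaussian -/

noncomputable def N01 : Measure ℝ := gaussianReal 0 1

instance : IsProbabilityMeasure N01 := by rw [N01]; infer_instance

lemma N01_eq_withDensity :
    N01 = volume.withDensity (fun x => ((phiN x).toNNReal : ENNReal)) := by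
  rw [N01, gaussianReal_of_var_ne_zero 0 (by norm_num)]
  congr 1
  ext x
  rw [gaussianPDF, ← phiN_eq, ENNReal.ofReal]

lemma integral_N01 (g : ℝ → ℝ) : ∫ x, g x ∂N01 = ∫ x, phiN x * g x := by
  rw [N01_eq_withDensity, integral_withDensity_eq_integral_smul]
  · congr 1; ext x
    simp [NNReal.smul_def, Real.coe_toNNReal _ (phiN_pos x).le]
  · exact (continuous_phiN.measurable).real_toNNReal

lemma integrable_N01 {g : ℝ → ℝ} (hg : Integrable (fun x => phiN x * g x)) :
    Integrable g N01 := by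
  rw [N01_eq_withDensity]
  refine (integrable_withDensity_iff_integrable_smul
    (f := fun x => (phiN x).toNNReal) (g := g) (μ := volume)
    (continuous_phiN.measurable).real_toNNReal).2 ?_
  refine hg.congr ?_
  filter_upwards with x
  simp [NNReal.smul_def, Real.coe_toNNReal _ (phiN_pos x).le]

lemma integrable_id_N01 : Integrable (fun x => x) N01 := by
  refine integrable_N01 ?_
  refine integrable_mul_phiN.congr ?_
  filter_upwards with x using by ring

lemma integral_mul_phiN_Ioi (u : ℝ) : ∫ x in Set.Ioi u, x * phiN x = phiN u := by
  have h := integral_Ioi_of_hasDerivAt_of_tendsto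
    (f := fun y => -phiN y) (f' := fun x => x * phiN x) (a := u) (m := 0)
    (continuous_phiN.neg.continuousWithinAt)
    (fun x _ => hasDerivAt_neg_phiN x)
    (integrable_mul_phiN.integrableOn)
    (by simpa using tendsto_phiN_atTop.neg)
  simpa using h

lemma integral_id_N01 : ∫ x, x ∂N01 = 0 := by
  rw [integral_N01]
  have hsplit : ∫ x, phiN x * x =
      (∫ x in Set.Iic 0, phiN x * x) + ∫ x in Set.Ioi 0, phiN x * x := by
    rw [← setIntegral_union (Set.Iic_disjoint_Ioi le_rfl) measurableSet_Ioi
      ((integrable_mul_phiN.congr (by filter_upwards with x using by ring)).integrableOn)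
      ((integrable_mul_phiN.congr (by filter_upwards with x using by ring)).integrableOn),
      Set.Iic_union_Ioi]
    exact (setIntegral_univ).symm
  have h1 : ∫ x in Set.Ioi (0:ℝ), phiN x * x = phiN 0 := by
    rw [← integral_mul_phiN_Ioi 0]
    exact setIntegral_congr_fun measurableSet_Ioi (fun x _ => by ring)
  have h2 : ∫ x in Set.Iic (0:ℝ), phiN x * x = -phiN 0 := by
    have hc := integral_comp_neg_Iic (0:ℝ) (fun x => phiN (-x) * (-x))
    simp only [neg_neg, neg_zero] at hc
    rw [hc]
    have hpt : ∀ x, phiN (-x) * (-x) = -(x * phiN x) := by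
      intro x; rw [show phiN (-x) = phiN x by simp [phiN]]; ring
    rw [setIntegral_congr_fun measurableSet_Ioi (fun x _ => hpt x),
      integral_neg, integral_mul_phiN_Ioi]
  rw [hsplit, h1, h2]; ring

lemma integral_posPart_N01 (u : ℝ) :
    ∫ x, max (x - u) 0 ∂N01 = phiN u - u * QN u := by
  rw [integral_N01]
  have hint : Integrable (fun x => phiN x * max (x - u) 0) := by
    have h1 : Integrable (fun x => x * phiN x - u * phiN x) :=
      integrable_mul_phiN.sub (integrable_phiN.const_mul u)
    refine Integrable.mono' (h1.abs.add integrable_phiN.abs) ?_ ?_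
    · exact (continuous_phiN.mul ((continuous_id.sub continuous_const).max continuous_const)).aestronglyMeasurable
    · filter_upwards with x
      rw [Real.norm_eq_abs, abs_of_nonneg (mul_nonneg (phiN_pos x).le (le_max_right _ _))]
      rcases le_total x u with h | h
      · rw [max_eq_right (by linarith), mul_zero]
        exact add_nonneg (abs_nonneg _) (abs_nonneg _)
      · rw [max_eq_left (by linarith)]
        have : phiN x * (x - u) = x * phiN x - u * phiN x := by ring
        rw [this]
        have := le_abs_self (x * phiN x - u * phiN x)
        have h0 := abs_nonneg (phiN x)
        calc x * phiN x - u * phiN x ≤ |x * phiN x - u * phiN x| := le_abs_self _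
          _ ≤ |x * phiN x - u * phiN x| + |phiN x| := by linarith
  have hsplit : ∫ x, phiN x * max (x - u) 0 =
      ∫ x in Set.Ioi u, phiN x * max (x - u) 0 := by
    rw [← setIntegral_eq_integral_of_forall_compl_eq_zero]
    intro x hx
    simp only [Set.mem_Ioi, not_lt] at hx
    rw [max_eq_right (by linarith), mul_zero]
  rw [hsplit]
  have : ∫ x in Set.Ioi u, phiN x * max (x - u) 0
      = ∫ x in Set.Ioi u, (x * phiN x - u * phiN x) := by
    refine setIntegral_congr_fun measurableSet_Ioi (fun x hx => ?_)
    rw [max_eq_left (by simp at hx; linarith)]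
    ring
  rw [this, integral_sub (integrable_mul_phiN.integrableOn)
    ((integrable_phiN.const_mul u).integrableOn), integral_mul_phiN_Ioi,
    integral_const_mul]
  rfl

/-! ### Part 5: key single-Gaussian bound -/

lemma gaussianReal_eq_map {m : ℝ} {v : NNReal} (hv : v ≠ 0) :
    gaussianReal m v = Measure.map (fun x => Real.sqrt v * x + m) N01 := by
  have h1 : Measure.map (fun x => Real.sqrt v * x) N01 = gaussianReal 0 v := by
    rw [N01, gaussianReal_map_const_mul]
    congr 1
    · ring
    · ext
      simp [Real.sq_sqrt (v.coe_nonneg)]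
  have h2 := gaussianReal_map_add_const (μ := 0) (v := v) m
  rw [← h1, Measure.map_map (by fun_prop) (by fun_prop), zero_add] at h2
  rw [← h2]
  rfl

lemma aemeas_aff {m : ℝ} {v : NNReal} : AEMeasurable (fun x : ℝ => Real.sqrt v * x + m) N01 := by
  fun_prop

lemma integrable_id_gaussian (m : ℝ) (v : NNReal) :
    Integrable (fun x => x) (gaussianReal m v) := by
  rcases eq_or_ne v 0 with hv | hv
  · rw [hv, gaussianReal_zero_var]
    exact (integrable_const m).congr (ae_eq_dirac (fun x : ℝ => x)).symm
  · rw [gaussianReal_eq_map hv]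
    refine (integrable_map_measure (g := fun x : ℝ => x) aestronglyMeasurable_id aemeas_aff).2 ?_
    exact (integrable_id_N01.const_mul _).add (integrable_const m)

lemma integral_id_gaussian (m : ℝ) (v : NNReal) :
    ∫ x, x ∂(gaussianReal m v) = m := by
  rcases eq_or_ne v 0 with hv | hv
  · rw [hv, gaussianReal_zero_var]
    exact integral_dirac _ m
  · rw [gaussianReal_eq_map hv,
      integral_map (f := fun x : ℝ => x) aemeas_aff aestronglyMeasurable_id]
    have h : ∫ x, (Real.sqrt v * x + m) ∂N01 = Real.sqrt v * ∫ x, x ∂N01 + m := by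
      rw [integral_add (integrable_id_N01.const_mul _) (integrable_const m),
        integral_const_mul, integral_const]
      have h1 : (N01 Set.univ).toReal = 1 := by rw [N01]; simp
      simp
    rw [h, integral_id_N01]; ring

lemma integral_posPart_gaussian {m : ℝ} {v : NNReal} (hv : v ≠ 0) (u : ℝ) :
    ∫ x, max (x - (m + Real.sqrt v * u)) 0 ∂(gaussianReal m v)
      = Real.sqrt v * (phiN u - u * QN u) := by
  have hmeas : AEStronglyMeasurable (fun x : ℝ => max (x - (m + Real.sqrt v * u)) 0)
      (Measure.map (fun x : ℝ => Real.sqrt v * x + m) N01) :=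
    ((continuous_id.sub continuous_const).max continuous_const).aestronglyMeasurable
  rw [gaussianReal_eq_map hv, integral_map aemeas_aff hmeas]
  have hs : (0:ℝ) < Real.sqrt v := Real.sqrt_pos.2 (by exact_mod_cast pos_iff_ne_zero.2 hv)
  calc ∫ x, max (Real.sqrt v * x + m - (m + Real.sqrt v * u)) 0 ∂N01
      = ∫ x, Real.sqrt v * max (x - u) 0 ∂N01 := by
        congr 1; ext x
        rw [show Real.sqrt v * x + m - (m + Real.sqrt v * u) = Real.sqrt v * (x - u) by ring,
          mul_max_of_nonneg _ _ hs.le, mul_zero]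
    _ = Real.sqrt v * (phiN u - u * QN u) := by
        rw [integral_const_mul, integral_posPart_N01]

lemma key_gaussian {Ω : Type*} [MeasurableSpace Ω] (P : Measure Ω) [IsProbabilityMeasure P]
    {Z : Ω → ℝ} (hZ : Measurable Z) {m : ℝ} {v : NNReal}
    (hlaw : Measure.map Z P = gaussianReal m v)
    {A : Set Ω} (hA : MeasurableSet A) :
    ∫ ω in A, Z ω ∂P ≤
      (P A).toReal * (m + Real.sqrt v * Real.sqrt (-2 * Real.log (P A).toReal)) := by
  set p := (P A).toReal with hp
  have hPlt : P A ≤ 1 := prob_le_one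
  have hPne : P A ≠ ⊤ := (lt_of_le_of_lt hPlt (by norm_num)).ne
  have hp0 : 0 ≤ p := ENNReal.toReal_nonneg
  have hp1 : p ≤ 1 := by
    rw [hp]
    exact ENNReal.toReal_le_of_le_ofReal (by norm_num) (by simpa using hPlt)
  have hZint : Integrable Z P := by
    have h := integrable_id_gaussian m v
    rw [← hlaw] at h
    exact (integrable_map_measure (g := fun x : ℝ => x) aestronglyMeasurable_id
      hZ.aemeasurable).1 h
  rcases eq_or_lt_of_le hp0 with hp0' | hp0'
  · -- p = 0
    have hPA : P A = 0 := by
      rcases (ENNReal.toReal_eq_zero_iff _).1 hp0'.symm with h | h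
      · exact h
      · exact absurd h hPne
    rw [← Measure.restrict_eq_zero] at hPA
    rw [hPA, integral_zero_measure, ← hp0']
    simp
  rcases eq_or_lt_of_le hp1 with hp1' | hp1'
  · -- p = 1
    have hPA1 : P A = 1 := (ENNReal.toReal_eq_one_iff _).1 hp1'
    have hAc : P Aᶜ = 0 := by
      rw [measure_compl hA hPne, hPA1, measure_univ, tsub_self]
    have hAuniv : A =ᵐ[P] (Set.univ : Set Ω) := MeasureTheory.ae_eq_univ.2 hAc
    rw [setIntegral_congr_set hAuniv, setIntegral_univ]
    have hEm : ∫ ω, Z ω ∂P = m := by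
      have h := integral_id_gaussian m v
      rw [← hlaw, integral_map (f := fun x : ℝ => x) hZ.aemeasurable aestronglyMeasurable_id] at h
      exact h
    rw [hEm, hp1']
    simp
  -- 0 < p < 1
  obtain ⟨u, hu⟩ := QN_surj hp0' hp1'
  rcases eq_or_ne v 0 with hv0 | hvne
  · -- v = 0 : Z = m a.e.
    rw [hv0, gaussianReal_zero_var] at hlaw
    have hZm : ∀ᵐ ω ∂P, Z ω = m := by
      have h0 : P (Z ⁻¹' {m}ᶜ) = 0 := by
        rw [← Measure.map_apply hZ (measurableSet_singleton m).compl, hlaw,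
          Measure.dirac_apply' _ (measurableSet_singleton m).compl]
        simp
      refine ae_iff.2 ?_
      exact h0
    have hconst : ∫ ω in A, Z ω ∂P = ∫ ω in A, m ∂P := by
      refine setIntegral_congr_ae hA ?_
      filter_upwards [hZm] with ω h _ using h
    rw [hconst, setIntegral_const, smul_eq_mul, hv0]
    simp only [NNReal.coe_zero, Real.sqrt_zero, zero_mul, add_zero]
    rw [mul_comm]; exact le_of_eq (mul_comm _ _)
  · -- v ≠ 0
    set c : ℝ := m + Real.sqrt v * u with hcdef
    have hmax_int : Integrable (fun ω => max (Z ω - c) 0) P :=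
      (hZint.sub (integrable_const c)).pos_part
    have hstep1 : ∫ ω in A, Z ω ∂P ≤ ∫ ω in A, (max (Z ω - c) 0 + c) ∂P := by
      refine setIntegral_mono_on hZint.integrableOn
        ((hmax_int.add (integrable_const c)).integrableOn) hA (fun ω _ => ?_)
      have := le_max_left (Z ω - c) 0
      linarith
    have hstep2 : ∫ ω in A, (max (Z ω - c) 0 + c) ∂P
        = (∫ ω in A, max (Z ω - c) 0 ∂P) + c * p := by
      rw [integral_add hmax_int.integrableOn (integrable_const c).integrableOn,
        setIntegral_const, smul_eq_mul, mul_comm]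
      rfl
    have hstep3 : ∫ ω in A, max (Z ω - c) 0 ∂P ≤ ∫ ω, max (Z ω - c) 0 ∂P := by
      refine setIntegral_le_integral hmax_int ?_
      filter_upwards with ω using le_max_right _ _
    have hstep4 : ∫ ω, max (Z ω - c) 0 ∂P = Real.sqrt v * (phiN u - u * QN u) := by
      have hcont : AEStronglyMeasurable (fun x : ℝ => max (x - c) 0) (Measure.map Z P) :=
        ((continuous_id.sub continuous_const).max continuous_const).aestronglyMeasurable
      rw [← integral_map hZ.aemeasurable hcont, hlaw, hcdef, integral_posPart_gaussian hvne u]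
    have hsv : (0:ℝ) ≤ Real.sqrt v := Real.sqrt_nonneg _
    have hkey : phiN u ≤ p * Real.sqrt (-2 * Real.log p) := by
      have := phiN_le_QN_sqrt u
      rwa [hu] at this
    have hfinal : Real.sqrt v * (phiN u - u * QN u) + c * p
        = p * m + Real.sqrt v * phiN u := by
      rw [hu, hcdef]; ring
    have hlast : Real.sqrt v * phiN u ≤ Real.sqrt v * (p * Real.sqrt (-2 * Real.log p)) :=
      mul_le_mul_of_nonneg_left hkey hsv
    calc ∫ ω in A, Z ω ∂P ≤ (∫ ω in A, max (Z ω - c) 0 ∂P) + c * p := by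
          rw [← hstep2]; exact hstep1
      _ ≤ (∫ ω, max (Z ω - c) 0 ∂P) + c * p := by linarith
      _ = p * m + Real.sqrt v * phiN u := by rw [hstep4, hfinal]
      _ ≤ p * (m + Real.sqrt v * Real.sqrt (-2 * Real.log p)) := by
          rw [mul_add]; nlinarith [hlast]

/-! ### Part 6: main theorem -/

lemma mul_sqrt_neg_log_le_one {q : ℝ} (h0 : 0 ≤ q) (h1 : q ≤ 1) :
    q * Real.sqrt (-2 * Real.log q) ≤ 1 := by
  rcases eq_or_lt_of_le h0 with h | h
  · rw [← h, zero_mul]; norm_num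
  · set t : ℝ := -2 * Real.log q with ht
    have hlog : Real.log q ≤ 0 := Real.log_nonpos h0 h1
    have ht0 : 0 ≤ t := by rw [ht]; linarith
    have hq : q = Real.exp (Real.log q) := (Real.exp_log h).symm
    have hsq : (q * Real.sqrt t) ^ 2 = t * Real.exp (-t) := by
      rw [mul_pow, Real.sq_sqrt ht0]
      rw [hq, ← Real.exp_nat_mul]
      push_cast
      rw [show (2:ℝ) * Real.log q = -t by rw [ht]; ring]
      ring
    have hexp : t * Real.exp (-t) ≤ 1 := by
      rw [Real.exp_neg, mul_inv_le_iff₀ (Real.exp_pos t), one_mul]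
      have := Real.add_one_le_exp t
      linarith
    have hnn : 0 ≤ q * Real.sqrt t := mul_nonneg h0 (Real.sqrt_nonneg _)
    nlinarith [hsq, hexp, hnn]

lemma vbos_le_bound {X : Type*} [Fintype X] (μ σ : X → ℝ) (hσ : ∀ x, 0 ≤ σ x)
    {p : X → ℝ} (hp : p ∈ stdSimplex ℝ X) : vbos μ σ p ≤ ∑ x, (|μ x| + σ x) := by
  obtain ⟨hp0, hp1⟩ := hp
  refine Finset.sum_le_sum (fun x _ => ?_)
  have hx1 : p x ≤ 1 := by
    rw [← hp1]
    exact Finset.single_le_sum (fun i _ => hp0 i) (Finset.mem_univ x)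
  have h1 : p x * μ x ≤ |μ x| := by
    calc p x * μ x ≤ |p x * μ x| := le_abs_self _
      _ = p x * |μ x| := by rw [abs_mul, abs_of_nonneg (hp0 x)]
      _ ≤ 1 * |μ x| := mul_le_mul_of_nonneg_right hx1 (abs_nonneg _)
      _ = |μ x| := one_mul _
  have h2 : σ x * (p x * Real.sqrt (-2 * Real.log (p x))) ≤ σ x * 1 :=
    mul_le_mul_of_nonneg_left (mul_sqrt_neg_log_le_one (hp0 x) hx1) (hσ x)
  calc p x * (μ x + σ x * Real.sqrt (-2 * Real.log (p x)))
      = p x * μ x + σ x * (p x * Real.sqrt (-2 * Real.log (p x))) := by ring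
    _ ≤ |μ x| + σ x := by linarith

theorem stmt_4 {Ω X : Type*} [MeasurableSpace Ω] [Fintype X] [Nonempty X]
    (P : Measure Ω) [IsProbabilityMeasure P] (R : X → Ω → ℝ)
    (hmeas : ∀ x, Measurable (R x)) (μ : X → ℝ) (K : Matrix X X ℝ) (hK : K.PosSemidef)
    (hGauss : IsGaussianVector P R μ K)
    (hties : ∀ x z, x ≠ z → P {ω | R x ω = R z ω} = 0) :
    (∫ ω, (⨆ x, R x ω) ∂P ≤
        vbos μ (fun x => Real.sqrt (K x x))
          (fun x => (P {ω | R x ω = ⨆ z, R z ω}).toReal)) ∧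
      vbos μ (fun x => Real.sqrt (K x x))
          (fun x => (P {ω | R x ω = ⨆ z, R z ω}).toReal) ≤
        sSup ((vbos μ fun x => Real.sqrt (K x x)) '' stdSimplex ℝ X) := by
  classical
  have hSmeas : Measurable (fun ω => ⨆ x, R x ω) := Measurable.iSup hmeas
  set S : Ω → ℝ := fun ω => ⨆ x, R x ω with hSdef
  -- coordinate laws
  have hlaw : ∀ x, Measure.map (R x) P = gaussianReal (μ x) (K x x).toNNReal := by
    intro x
    have h := hGauss (fun z => if z = x then 1 else 0)
    have h1 : (fun ω => ∑ z, (if z = x then 1 else 0) * R z ω) = R x := by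
      funext ω
      simp [ite_mul]
    have h2 : (∑ z, (if z = x then (1:ℝ) else 0) * μ z) = μ x := by simp [ite_mul]
    have h3 : ((fun z => if z = x then (1:ℝ) else 0) ⬝ᵥ
        (K *ᵥ fun z => if z = x then (1:ℝ) else 0)) = K x x := by
      simp [dotProduct, Matrix.mulVec, ite_mul, mul_ite]
    rw [h1, h2, h3] at h
    exact h
  have hsig : ∀ x, Real.sqrt (((K x x).toNNReal : ℝ)) = Real.sqrt (K x x) := by
    intro x
    rw [Real.coe_toNNReal']
    rcases le_total (K x x) 0 with h | h
    · rw [max_eq_right h, Real.sqrt_zero, eq_comm]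
      exact Real.sqrt_eq_zero'.2 h
    · rw [max_eq_left h]
  have hRint : ∀ x, Integrable (R x) P := by
    intro x
    have h := integrable_id_gaussian (μ x) (K x x).toNNReal
    rw [← hlaw x] at h
    exact (integrable_map_measure (g := fun t : ℝ => t) aestronglyMeasurable_id
      (hmeas x).aemeasurable).1 h
  set A : X → Set Ω := fun x => {ω | R x ω = S ω} with hAdef
  have hAmeas : ∀ x, MeasurableSet (A x) := fun x => measurableSet_eq_fun (hmeas x) hSmeas
  have hattain : ∀ ω, ∃ x, R x ω = S ω := by
    intro ω
    obtain ⟨x, hx⟩ := Finite.exists_max (fun x => R x ω)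
    exact ⟨x, le_antisymm (le_ciSup (f := fun y => R y ω) (Set.finite_range _).bddAbove x) (ciSup_le hx)⟩
  have hAunion : ⋃ x, A x = Set.univ := by
    ext ω
    simp only [Set.mem_iUnion, Set.mem_univ, iff_true, hAdef, Set.mem_setOf_eq]
    exact hattain ω
  -- disjointification
  set n := Fintype.card X with hn
  set e := Fintype.equivFin X with he
  set f : ℕ → Set Ω := fun k => if h : k < n then A (e.symm ⟨k, h⟩) else ∅ with hf
  have hfmeas : ∀ k, MeasurableSet (f k) := by
    intro k
    rw [hf]
    dsimp only
    split
    · exact hAmeas _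
    · exact MeasurableSet.empty
  have hfx : ∀ x, f (e x) = A x := by
    intro x
    rw [hf]
    dsimp only
    rw [dif_pos (e x).isLt]
    have heta : (⟨(e x : ℕ), (e x).isLt⟩ : Fin n) = e x := Fin.eta _ _
    rw [heta, e.symm_apply_apply]
  set B : X → Set Ω := fun x => disjointed f (e x) with hB
  have hBmeas : ∀ x, MeasurableSet (B x) := fun x => MeasurableSet.disjointed hfmeas _
  have hBsub : ∀ x, B x ⊆ A x := by
    intro x
    rw [hB]
    dsimp only
    rw [← hfx x]
    exact disjointed_subset f _
  have hBdisj : Pairwise (Function.onFun Disjoint B) := by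
    intro x y hxy
    have hne : ((e x : ℕ)) ≠ ((e y : ℕ)) := by
      intro h
      exact hxy (e.injective (Fin.ext h))
    exact disjoint_disjointed f hne
  have hBunion : ⋃ x, B x = Set.univ := by
    rw [← hAunion]
    apply Set.Subset.antisymm
    · exact Set.iUnion_mono hBsub
    · intro ω hω
      have h1 : ω ∈ ⋃ k, f k := by
        obtain ⟨x, hx⟩ := Set.mem_iUnion.1 hω
        exact Set.mem_iUnion.2 ⟨(e x : ℕ), by rw [hfx]; exact hx⟩
      rw [← iUnion_disjointed] at h1
      obtain ⟨k, hk⟩ := Set.mem_iUnion.1 h1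
      have hkn : k < n := by
        by_contra hkn
        have hempty : f k = ∅ := by rw [hf]; dsimp only; rw [dif_neg hkn]
        have := disjointed_subset f k hk
        rw [hempty] at this
        exact this
      refine Set.mem_iUnion.2 ⟨e.symm ⟨k, hkn⟩, ?_⟩
      rw [hB]
      dsimp only
      rw [e.apply_symm_apply]
      exact hk
  have hdiffnull : ∀ x, P (A x \ B x) = 0 := by
    intro x
    have hsub : A x \ B x ⊆ ⋃ y ∈ ({x}ᶜ : Set X), {ω | R x ω = R y ω} := by
      intro ω hω
      obtain ⟨hωA, hωB⟩ := hω
      have hωf : ω ∈ f (e x) := by rw [hfx]; exact hωA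
      have hex : ∃ i, i < (e x : ℕ) ∧ ω ∈ f i := by
        by_contra hcon
        push_neg at hcon
        apply hωB
        rw [hB]
        dsimp only
        rw [disjointed_eq_inter_compl]
        refine ⟨hωf, ?_⟩
        simp only [Set.mem_iInter, Set.mem_compl_iff]
        intro i hi
        exact fun hfi => absurd hfi (by
          intro hmem
          exact absurd hmem ((fun h => h) (by
            have := hcon i hi
            exact this)))
      obtain ⟨i, hi, hωi⟩ := hex
      have hin : i < n := lt_trans hi (e x).isLt
      have hωAy : ω ∈ A (e.symm ⟨i, hin⟩) := by
        rw [← show f i = A (e.symm ⟨i, hin⟩) by rw [hf]; dsimp only; rw [dif_pos hin]]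
        exact hωi
      set y := e.symm ⟨i, hin⟩ with hy
      have hyx : y ≠ x := by
        intro hcontra
        rw [hcontra] at hy
        have : (e x : ℕ) = i := by rw [hy]; rw [e.apply_symm_apply]
        omega
      refine Set.mem_biUnion (Set.mem_compl_singleton_iff.2 hyx) ?_
      have h1 : R x ω = S ω := hωA
      have h2 : R y ω = S ω := hωAy
      show R x ω = R y ω
      rw [h1, h2]
    refine measure_mono_null hsub ?_
    refine measure_biUnion_null_iff (Set.to_countable _) |>.2 ?_
    intro y hy
    exact hties x y (Ne.symm (Set.mem_compl_singleton_iff.1 hy))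
  -- B and A agree a.e.
  have hBAae : ∀ x, B x =ᵐ[P] A x := by
    intro x
    refine (MeasureTheory.ae_eq_set).2 ⟨?_, hdiffnull x⟩
    have : B x \ A x = ∅ := Set.diff_eq_empty.2 (hBsub x)
    rw [this, measure_empty]
  have hPB : ∀ x, P (B x) = P (A x) := fun x => measure_congr (hBAae x)
  -- S is integrable
  have hSint : Integrable S P := by
    refine Integrable.mono' (integrable_finset_sum Finset.univ (fun x _ => (hRint x).abs))
      hSmeas.aestronglyMeasurable ?_
    filter_upwards with ω
    obtain ⟨x, hx⟩ := hattain ω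
    rw [Real.norm_eq_abs, ← hx]
    calc |R x ω| ≤ ∑ y, |R y ω| :=
          Finset.single_le_sum (f := fun y => |R y ω|) (fun i _ => abs_nonneg _) (Finset.mem_univ x)
      _ = ∑ y, |R y ω| := rfl
  -- decompose the integral
  have hdecomp : ∫ ω, S ω ∂P = ∑ x, ∫ ω in B x, S ω ∂P := by
    have h := integral_iUnion hBmeas hBdisj
      (by rw [hBunion]; exact hSint.integrableOn)
    rw [hBunion, Measure.restrict_univ] at h
    rw [h, tsum_fintype]
  -- per-coordinate bound
  have hper : ∀ x, ∫ ω in B x, S ω ∂P ≤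
      (P (A x)).toReal * (μ x + Real.sqrt (K x x) * Real.sqrt (-2 * Real.log (P (A x)).toReal)) := by
    intro x
    have h1 : ∫ ω in B x, S ω ∂P = ∫ ω in B x, R x ω ∂P := by
      refine setIntegral_congr_fun (hBmeas x) (fun ω hω => ?_)
      exact (hBsub x hω).symm
    have h2 : ∫ ω in B x, R x ω ∂P = ∫ ω in A x, R x ω ∂P := setIntegral_congr_set (hBAae x)
    have h3 := key_gaussian P (hmeas x) (hlaw x) (hAmeas x)
    rw [hsig x] at h3
    rw [h1, h2]
    exact h3
  -- sum of probabilities is one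
  have hsum1 : ∑ x, (P (A x)).toReal = 1 := by
    have h := measure_iUnion (μ := P) hBdisj hBmeas
    rw [hBunion, measure_univ, tsum_fintype] at h
    have hfin : ∀ x ∈ Finset.univ, P (B x) ≠ (⊤ : ENNReal) := by
      intro x _
      exact (lt_of_le_of_lt prob_le_one (by norm_num)).ne
    have h2 : ∑ x, (P (B x)).toReal = ((∑ x, P (B x)) : ENNReal).toReal :=
      (ENNReal.toReal_sum hfin).symm
    have h3 : ∑ x, (P (B x)).toReal = 1 := by
      rw [h2, ← h]
      simp
    calc ∑ x, (P (A x)).toReal = ∑ x, (P (B x)).toReal := by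
          refine Finset.sum_congr rfl (fun x _ => ?_)
          rw [hPB x]
      _ = 1 := h3
  have hmem : (fun x => (P (A x)).toReal) ∈ stdSimplex ℝ X :=
    ⟨fun x => ENNReal.toReal_nonneg, hsum1⟩
  have hσnn : ∀ x, 0 ≤ Real.sqrt (K x x) := fun x => Real.sqrt_nonneg _
  have hbdd : BddAbove ((vbos μ fun x => Real.sqrt (K x x)) '' stdSimplex ℝ X) := by
    refine ⟨∑ x, (|μ x| + Real.sqrt (K x x)), ?_⟩
    rintro y ⟨p, hp, rfl⟩
    exact vbos_le_bound μ _ hσnn hp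
  constructor
  · calc ∫ ω, S ω ∂P = ∑ x, ∫ ω in B x, S ω ∂P := hdecomp
      _ ≤ ∑ x, (P (A x)).toReal *
            (μ x + Real.sqrt (K x x) * Real.sqrt (-2 * Real.log (P (A x)).toReal)) :=
          Finset.sum_le_sum (fun x _ => hper x)
      _ = vbos μ (fun x => Real.sqrt (K x x)) (fun x => (P (A x)).toReal) := rfl
  · exact le_csSup hbdd (Set.mem_image_of_mem _ hmem)
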